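/- Discrete Sobolev inequality: for every u ∈ ℓ²(ℤ), ‖D₋u‖_∞ ≤ √(3/2)(‖D₊D₋u‖ + ‖u‖), where ‖·‖ is the discrete L² norm with weight Δx. -/

import Mathlib

/-- Differences for grid functions on ℤ. -/
noncomputable def Dp (Δx : ℝ) (u : ℤ → ℝ) (j : ℤ) : ℝ := (u (j + 1) - u j) / Δx
noncomputable def Dm (Δx : ℝ) (u : ℤ → ℝ) (j : ℤ) : ℝ := (u j - u (j - 1)) / Δx

lemma abs_mul_summable {a b : ℤ → ℝ} (ha : Summable fun j => a j ^ 2)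
    (hb : Summable fun j => b j ^ 2) : Summable fun j => |a j * b j| := by
  apply Summable.of_nonneg_of_le (fun j => abs_nonneg _) (fun j => ?_)
    ((ha.add hb).mul_left (1/2))
  rw [abs_mul]
  nlinarith [sq_abs (a j), sq_abs (b j), sq_nonneg (|a j| - |b j|), abs_nonneg (a j), abs_nonneg (b j)]

lemma tsum_abs_mul_le {a b : ℤ → ℝ} (ha : Summable fun j => a j ^ 2)
    (hb : Summable fun j => b j ^ 2) :
    ∑' j, |a j * b j| ≤ Real.sqrt (∑' j, a j ^ 2) * Real.sqrt (∑' j, b j ^ 2) := by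
  apply Summable.tsum_le_of_sum_le (abs_mul_summable ha hb)
  intro s
  calc ∑ j ∈ s, |a j * b j| = ∑ j ∈ s, |a j| * |b j| := by simp [abs_mul]
    _ ≤ Real.sqrt (∑ j ∈ s, |a j| ^ 2) * Real.sqrt (∑ j ∈ s, |b j| ^ 2) :=
        Real.sum_mul_le_sqrt_mul_sqrt s _ _
    _ ≤ _ := by
        have h1 : ∑ j ∈ s, |a j| ^ 2 ≤ ∑' j, a j ^ 2 := by
          simp only [sq_abs]
          exact Summable.sum_le_tsum s (fun j _ => sq_nonneg (a j)) ha
        have h2 : ∑ j ∈ s, |b j| ^ 2 ≤ ∑' j, b j ^ 2 := by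
          simp only [sq_abs]
          exact Summable.sum_le_tsum s (fun j _ => sq_nonneg (b j)) hb
        gcongr

lemma shift_summable {f : ℤ → ℝ} (hf : Summable f) (c : ℤ) : Summable fun j => f (j - c) :=
  ((Equiv.subRight c).summable_iff).2 hf

lemma shift_tsum {f : ℤ → ℝ} (c : ℤ) : ∑' j, f (j - c) = ∑' j, f j :=
  (Equiv.subRight c).tsum_eq f

lemma shift_summable' {f : ℤ → ℝ} (hf : Summable f) (c : ℤ) : Summable fun j => f (j + c) :=
  ((Equiv.addRight c).summable_iff).2 hf

theorem stmt_18 (Δx : ℝ) (hΔx : 0 < Δx) (u : ℤ → ℝ)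
    (hu : Summable (fun j => (u j) ^ 2))
    (hDDu : Summable (fun j => (Dp Δx (Dm Δx u) j) ^ 2)) :
    ∀ j : ℤ, |Dm Δx u j| ≤ Real.sqrt (3 / 2)
      * (Real.sqrt (Δx * ∑' i : ℤ, (Dp Δx (Dm Δx u) i) ^ 2)
         + Real.sqrt (Δx * ∑' i : ℤ, (u i) ^ 2)) := by
  intro j
  have hΔ2 : (0:ℝ) < Δx ^ 2 := by positivity
  have hvj : ∀ k, Dm Δx u k = (u k - u (k-1)) / Δx := fun k => rfl
  have hwj : ∀ k, Dp Δx (Dm Δx u) k = ((u (k+1) - u k) - (u k - u (k-1))) / Δx ^ 2 := by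
    intro k
    simp only [Dp, Dm, add_sub_cancel_right]
    rw [div_sub_div_same, div_div, ← pow_two]
  set v : ℤ → ℝ := Dm Δx u with hv
  set w : ℤ → ℝ := Dp Δx (Dm Δx u) with hwdef
  -- shifted summabilities
  have hu1 : Summable fun k => u (k-1) ^ 2 := shift_summable hu 1
  -- v is ℓ²
  have hvsum : Summable fun k => v k ^ 2 := by
    apply Summable.of_nonneg_of_le (fun k => sq_nonneg _) (fun k => ?_)
      ((hu.add hu1).mul_left (2 / Δx ^ 2))
    rw [hvj, div_pow, div_le_iff₀ hΔ2]
    have : 2 / Δx ^ 2 * (u k ^ 2 + u (k-1) ^ 2) * Δx ^ 2 = 2 * (u k ^ 2 + u (k-1)^2) := by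
      field_simp
    rw [this]
    nlinarith [sq_nonneg (u k + u (k-1))]
  -- summation by parts : ∑ w u = - ∑ v²
  set d : ℤ → ℝ := fun k => u (k+1) - u k with hd
  have hdsum : Summable fun k => d k ^ 2 := by
    have hu1' : Summable fun k => u (k+1) ^ 2 := shift_summable' hu 1
    apply Summable.of_nonneg_of_le (fun k => sq_nonneg _) (fun k => ?_)
      ((hu1'.add hu).mul_left 2)
    simp only [hd]
    nlinarith [sq_nonneg (u (k+1) + u k)]
  have hd1sum : Summable fun k => d (k-1) ^ 2 := shift_summable hdsum 1
  set p : ℤ → ℝ := fun k => d k * u k with hp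
  have hpsum : Summable p := by
    apply Summable.of_abs
    exact abs_mul_summable hdsum hu
  have hp1sum : Summable fun k => p (k-1) := shift_summable hpsum 1
  have hkey : ∑' k, w k * u k = - ∑' k, v k ^ 2 := by
    have e1 : ∀ k, w k * u k = ((p k - p (k-1)) - d (k-1) ^ 2) * (1 / Δx ^ 2) := by
      intro k
      rw [hwj]
      simp only [hp, hd, sub_add_cancel]
      field_simp
      ring
    have e2 : ∀ k, v k ^ 2 = d (k-1) ^ 2 * (1 / Δx ^ 2) := by
      intro k
      rw [hvj]
      simp only [hd, sub_add_cancel]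
      field_simp
    calc ∑' k, w k * u k = ∑' k, ((p k - p (k-1)) - d (k-1) ^ 2) * (1 / Δx ^ 2) := by
          exact tsum_congr e1
      _ = (∑' k, ((p k - p (k-1)) - d (k-1) ^ 2)) * (1 / Δx ^ 2) := tsum_mul_right
      _ = ((∑' k, (p k - p (k-1))) - ∑' k, d (k-1) ^ 2) * (1 / Δx ^ 2) := by
          rw [Summable.tsum_sub (hpsum.sub hp1sum) hd1sum]
      _ = ((∑' k, p k - ∑' k, p (k-1)) - ∑' k, d (k-1) ^ 2) * (1 / Δx ^ 2) := by
          rw [Summable.tsum_sub hpsum hp1sum]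
      _ = (0 - ∑' k, d (k-1) ^ 2) * (1 / Δx ^ 2) := by
          rw [shift_tsum (f := p) 1, sub_self]
      _ = - ∑' k, v k ^ 2 := by
          rw [tsum_congr e2, tsum_mul_right]
          ring
  -- abbreviations
  set W : ℝ := Real.sqrt (Δx * ∑' i : ℤ, w i ^ 2) with hW
  set U : ℝ := Real.sqrt (Δx * ∑' i : ℤ, u i ^ 2) with hU
  have hWnn : 0 ≤ W := Real.sqrt_nonneg _
  have hUnn : 0 ≤ U := Real.sqrt_nonneg _
  have hwnn : 0 ≤ ∑' i : ℤ, w i ^ 2 := tsum_nonneg fun i => sq_nonneg _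
  have hunn : 0 ≤ ∑' i : ℤ, u i ^ 2 := tsum_nonneg fun i => sq_nonneg _
  have hvnn : 0 ≤ ∑' i : ℤ, v i ^ 2 := tsum_nonneg fun i => sq_nonneg _
  -- ‖v‖² ≤ W U
  have hWU : W * U = Δx * (Real.sqrt (∑' i, w i ^ 2) * Real.sqrt (∑' i, u i ^ 2)) := by
    rw [hW, hU, Real.sqrt_mul hΔx.le, Real.sqrt_mul hΔx.le]
    rw [show Real.sqrt Δx * Real.sqrt (∑' i, w i ^ 2) * (Real.sqrt Δx * Real.sqrt (∑' i, u i ^ 2))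
      = (Real.sqrt Δx * Real.sqrt Δx) * (Real.sqrt (∑' i, w i ^ 2) * Real.sqrt (∑' i, u i ^ 2)) by ring]
    rw [Real.mul_self_sqrt hΔx.le]
  have hVle : Δx * ∑' i, v i ^ 2 ≤ W * U := by
    have h1 : ∑' i, v i ^ 2 = - ∑' k, w k * u k := by rw [hkey]; ring
    have hwu : Summable fun k => w k * u k := (abs_mul_summable hDDu hu).of_abs
    have h2 : - ∑' k, w k * u k ≤ ∑' k, |w k * u k| := by
      rw [← tsum_neg]
      exact Summable.tsum_le_tsum (fun k => neg_le_abs _) hwu.neg (abs_mul_summable hDDu hu)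
    have h3 := tsum_abs_mul_le hDDu hu
    rw [hWU, h1]
    have := h2.trans h3
    nlinarith
  -- telescoping : v j ² ≤ 2 Δx √Σw² √Σv²
  have hw1sum : Summable fun k => w (k-1) ^ 2 := shift_summable hDDu 1
  have hv1sum : Summable fun k => v (k-1) ^ 2 := shift_summable hvsum 1
  set h : ℤ → ℝ := fun k => |w (k-1) * v k| + |w (k-1) * v (k-1)| with hh
  have hhsum : Summable h :=
    (abs_mul_summable hw1sum hvsum).add (abs_mul_summable hw1sum hv1sum)
  have hhnn : ∀ k, 0 ≤ h k := fun k => add_nonneg (abs_nonneg _) (abs_nonneg _)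
  have hstep : ∀ k : ℤ, v k ^ 2 - v (k-1) ^ 2 ≤ Δx * h k := by
    intro k
    have hvk : v k - v (k-1) = Δx * w (k-1) := by
      rw [hvj, hvj, hwj]
      have hk : k - 1 + 1 = k := by ring
      rw [hk, div_sub_div_same]
      field_simp
    have : v k ^ 2 - v (k-1) ^ 2 = (Δx * w (k-1)) * (v k + v (k-1)) := by
      rw [← hvk]; ring
    rw [this, hh]
    calc Δx * w (k-1) * (v k + v (k-1))
        = Δx * (w (k-1) * v k + w (k-1) * v (k-1)) := by ring
      _ ≤ Δx * (|w (k-1) * v k| + |w (k-1) * v (k-1)|) := by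
          apply mul_le_mul_of_nonneg_left _ hΔx.le
          exact add_le_add (le_abs_self _) (le_abs_self _)
  have htel : ∀ n : ℕ, v j ^ 2 ≤ v (j - n) ^ 2 + Δx * ∑' k, h k := by
    intro n
    have hinj : Function.Injective (fun i : ℕ => j - (i:ℤ)) := by
      intro a b hab
      simpa using hab
    have e : ∑ i ∈ Finset.range n, (v (j - (i:ℤ)) ^ 2 - v (j - (i:ℤ) - 1) ^ 2)
        = v j ^ 2 - v (j - n) ^ 2 := by
      have := Finset.sum_range_sub' (fun i : ℕ => v (j - (i:ℤ)) ^ 2) n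
      simp only [Nat.cast_zero, sub_zero] at this
      rw [← this]
      apply Finset.sum_congr rfl
      intro i _
      congr 2
      push_cast
      ring
    have hb : ∑ i ∈ Finset.range n, (v (j - (i:ℤ)) ^ 2 - v (j - (i:ℤ) - 1) ^ 2)
        ≤ ∑ i ∈ Finset.range n, Δx * h (j - (i:ℤ)) := by
      apply Finset.sum_le_sum
      intro i _
      have := hstep (j - (i:ℤ))
      simpa using this
    have hc : ∑ i ∈ Finset.range n, Δx * h (j - (i:ℤ)) ≤ Δx * ∑' k, h k := by
      rw [← Finset.mul_sum]
      apply mul_le_mul_of_nonneg_left _ hΔx.le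
      have himg : ∑ k ∈ (Finset.range n).image (fun i : ℕ => j - (i:ℤ)), h k
          = ∑ i ∈ Finset.range n, h (j - (i:ℤ)) :=
        Finset.sum_image (fun a _ b _ hab => hinj hab)
      rw [← himg]
      exact Summable.sum_le_tsum _ (fun k _ => hhnn k) hhsum
    nlinarith [e ▸ (hb.trans hc)]
  have hlim : Filter.Tendsto (fun n : ℕ => v (j - (n:ℤ)) ^ 2) Filter.atTop (nhds 0) := by
    have h1 : Filter.Tendsto (fun k : ℤ => v k ^ 2) Filter.cofinite (nhds 0) :=
      hvsum.tendsto_cofinite_zero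
    have hinj : Function.Injective (fun i : ℕ => j - (i:ℤ)) := by
      intro a b hab; simpa using hab
    have h2 : Filter.Tendsto (fun i : ℕ => j - (i:ℤ)) Filter.atTop Filter.cofinite := by
      rw [← Nat.cofinite_eq_atTop]
      exact hinj.tendsto_cofinite
    exact h1.comp h2
  have hvj2 : v j ^ 2 ≤ Δx * ∑' k, h k := by
    have := ((hlim.add_const (Δx * ∑' k, h k)))
    rw [zero_add] at this
    exact ge_of_tendsto this (Filter.Eventually.of_forall htel)
  have hhbound : ∑' k, h k ≤ 2 * Real.sqrt (∑' i, w i ^ 2) * Real.sqrt (∑' i, v i ^ 2) := by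
    simp only [hh]
    rw [Summable.tsum_add (abs_mul_summable hw1sum hvsum) (abs_mul_summable hw1sum hv1sum)]
    have c1 := tsum_abs_mul_le hw1sum hvsum
    have c2 := tsum_abs_mul_le hw1sum hv1sum
    rw [shift_tsum (f := fun k => w k ^ 2) 1] at c1 c2
    rw [shift_tsum (f := fun k => v k ^ 2) 1] at c2
    nlinarith [(tsum_nonneg (fun k => abs_nonneg (w (k-1) * v k)) : 0 ≤ ∑' k, |w (k-1) * v k|),
      (tsum_nonneg (fun k => abs_nonneg (w (k-1) * v (k-1))) : 0 ≤ ∑' k, |w (k-1) * v (k-1)|)]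
  -- final arithmetic
  have hVW : Real.sqrt (Δx * ∑' i, v i ^ 2) ≤ (W + U) / 2 := by
    have h1 : Δx * ∑' i, v i ^ 2 ≤ ((W + U) / 2) ^ 2 := by
      refine hVle.trans ?_
      nlinarith [sq_nonneg (W - U)]
    calc Real.sqrt (Δx * ∑' i, v i ^ 2) ≤ Real.sqrt (((W + U) / 2) ^ 2) :=
          Real.sqrt_le_sqrt h1
      _ = (W + U) / 2 := Real.sqrt_sq (by positivity)
  have hmain : v j ^ 2 ≤ (W + U) ^ 2 := by
    have h1 : Δx * ∑' k, h k ≤ 2 * W * Real.sqrt (Δx * ∑' i, v i ^ 2) := by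
      have e : W * Real.sqrt (Δx * ∑' i, v i ^ 2)
          = Δx * (Real.sqrt (∑' i, w i ^ 2) * Real.sqrt (∑' i, v i ^ 2)) := by
        rw [hW, Real.sqrt_mul hΔx.le, Real.sqrt_mul hΔx.le]
        rw [show Real.sqrt Δx * Real.sqrt (∑' i, w i ^ 2) *
          (Real.sqrt Δx * Real.sqrt (∑' i, v i ^ 2))
          = (Real.sqrt Δx * Real.sqrt Δx) * (Real.sqrt (∑' i, w i ^ 2)
            * Real.sqrt (∑' i, v i ^ 2)) by ring]
        rw [Real.mul_self_sqrt hΔx.le]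
      rw [show (2:ℝ) * W * Real.sqrt (Δx * ∑' i, v i ^ 2)
        = 2 * (W * Real.sqrt (Δx * ∑' i, v i ^ 2)) by ring, e]
      nlinarith [hhbound]
    have h2 := hvj2.trans h1
    have h3 : 2 * W * Real.sqrt (Δx * ∑' i, v i ^ 2) ≤ 2 * W * ((W + U) / 2) :=
      mul_le_mul_of_nonneg_left hVW (by positivity)
    nlinarith [h2.trans h3]
  have habs : |v j| ≤ W + U := by
    have := Real.sqrt_le_sqrt hmain
    rwa [Real.sqrt_sq_eq_abs, Real.sqrt_sq (by positivity)] at this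
  have hsq : (1:ℝ) ≤ Real.sqrt (3/2) := by
    have h1 : Real.sqrt 1 ≤ Real.sqrt (3/2) := Real.sqrt_le_sqrt (by norm_num)
    simpa using h1
  calc |v j| ≤ W + U := habs
    _ = 1 * (W + U) := by ring
    _ ≤ Real.sqrt (3/2) * (W + U) := by
        apply mul_le_mul_of_nonneg_right hsq (by positivity)
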